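/- For every 0 < a ≤ 1, the function ℓ(δ) = 2^{2−a}(e^δ − 1)(log 2)^{1−a}(log(e^{−δ}+1) + log(e^δ+1))^{a−1}/(e^δ + 1) satisfies: (i) ℓ(−δ) = −ℓ(δ) for all δ ∈ ℝ; (ii) ℓ(δ) > 0 for every δ > 0; (iii) |ℓ(δ)| ≤ 3 for every δ ∈ ℝ. -/

import Mathlib

open Real

/-- `ℓ(δ) = F_a'(1+δ)
  = 2^{2-a}(e^δ - 1)(log 2)^{1-a}(log(e^{-δ}+1)+log(e^δ+1))^{a-1}/(e^δ+1)`. -/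
noncomputable def ell (a δ : ℝ) : ℝ :=
  (2 : ℝ) ^ (2 - a) * (Real.exp δ - 1) * Real.log 2 ^ (1 - a) *
    (Real.log (Real.exp (-δ) + 1) + Real.log (Real.exp δ + 1)) ^ (a - 1) /
    (Real.exp δ + 1)

lemma Lge (δ : ℝ) : 2 * Real.log 2 ≤ Real.log (Real.exp (-δ) + 1) + Real.log (Real.exp δ + 1) := by
  have h1 : (0:ℝ) < Real.exp (-δ) + 1 := by positivity
  have h2 : (0:ℝ) < Real.exp δ + 1 := by positivity
  rw [← Real.log_mul (ne_of_gt h1) (ne_of_gt h2)]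
  have h4 : (2:ℝ) * Real.log 2 = Real.log 4 := by
    rw [show (4:ℝ) = 2 ^ (2:ℕ) by norm_num, Real.log_pow]; push_cast; ring
  rw [h4]
  apply Real.log_le_log (by norm_num)
  have hx : (0:ℝ) < Real.exp δ := Real.exp_pos δ
  have hprod : Real.exp (-δ) * Real.exp δ = 1 := by rw [← Real.exp_add]; simp
  have key : 2 ≤ Real.exp (-δ) + Real.exp δ := by
    nlinarith [sq_nonneg (Real.exp δ - 1), Real.exp_pos δ, Real.exp_pos (-δ),
      sq_nonneg (Real.exp (-δ) - Real.exp δ)]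
  nlinarith

theorem stmt_10 (a : ℝ) (ha0 : 0 < a) (ha1 : a ≤ 1) :
    (∀ δ : ℝ, ell a (-δ) = -ell a δ) ∧
    (∀ δ : ℝ, 0 < δ → 0 < ell a δ) ∧
    (∀ δ : ℝ, |ell a δ| ≤ 3) := by
  have hlog2 : (0:ℝ) < Real.log 2 := Real.log_pos (by norm_num)
  have hLpos : ∀ δ : ℝ, (0:ℝ) < Real.log (Real.exp (-δ) + 1) + Real.log (Real.exp δ + 1) := by
    intro δ
    have := Lge δ
    nlinarith
  refine ⟨?_, ?_, ?_⟩
  · intro δ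
    unfold ell
    rw [neg_neg, Real.exp_neg]
    have hx : (0:ℝ) < Real.exp δ := Real.exp_pos δ
    have h1 : (Real.exp δ)⁻¹ + 1 ≠ 0 := by positivity
    have h2 : Real.exp δ + 1 ≠ 0 := by positivity
    rw [add_comm (Real.log (Real.exp δ + 1))]
    field_simp
    ring
  · intro δ hδ
    have hx : (1:ℝ) < Real.exp δ := by
      rw [show (1:ℝ) = Real.exp 0 by simp]; exact Real.exp_lt_exp.mpr hδ
    unfold ell
    have h1 : (0:ℝ) < (2:ℝ) ^ (2 - a) := Real.rpow_pos_of_pos (by norm_num) _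
    have h2 : (0:ℝ) < Real.log 2 ^ (1 - a) := Real.rpow_pos_of_pos hlog2 _
    have h3 := Real.rpow_pos_of_pos (hLpos δ) (a - 1)
    have hd : (0:ℝ) < Real.exp δ + 1 := by positivity
    exact div_pos (mul_pos (mul_pos (mul_pos h1 (by linarith)) h2) h3) hd
  · intro δ
    have hx : (0:ℝ) < Real.exp δ := Real.exp_pos δ
    have hd : (0:ℝ) < Real.exp δ + 1 := by positivity
    have h1 : (0:ℝ) < (2:ℝ) ^ (2 - a) := Real.rpow_pos_of_pos (by norm_num) _
    have h2 : (0:ℝ) < Real.log 2 ^ (1 - a) := Real.rpow_pos_of_pos hlog2 _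
    have h3 := Real.rpow_pos_of_pos (hLpos δ) (a - 1)
    have habs : |ell a δ| = (2:ℝ) ^ (2 - a) * |Real.exp δ - 1| * Real.log 2 ^ (1 - a) *
        (Real.log (Real.exp (-δ) + 1) + Real.log (Real.exp δ + 1)) ^ (a - 1) /
        (Real.exp δ + 1) := by
      unfold ell
      rw [abs_div, abs_mul, abs_mul, abs_mul, abs_of_pos h1, abs_of_pos h2,
        abs_of_pos h3, abs_of_pos hd]
    rw [habs]
    have hL : (Real.log (Real.exp (-δ) + 1) + Real.log (Real.exp δ + 1)) ^ (a - 1)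
        ≤ (2 * Real.log 2) ^ (a - 1) :=
      Real.rpow_le_rpow_of_nonpos (by positivity) (Lge δ) (by linarith)
    have hnum : |Real.exp δ - 1| ≤ Real.exp δ + 1 := by
      rw [abs_le]; constructor <;> linarith
    have key : (2:ℝ) ^ (2 - a) * Real.log 2 ^ (1 - a) * (2 * Real.log 2) ^ (a - 1) = 2 := by
      rw [Real.mul_rpow (by norm_num) hlog2.le]
      rw [show (2:ℝ) ^ (2-a) * Real.log 2 ^ (1-a) * ((2:ℝ)^(a-1) * Real.log 2 ^ (a-1))
        = ((2:ℝ)^(2-a) * (2:ℝ)^(a-1)) * (Real.log 2 ^ (1-a) * Real.log 2 ^ (a-1)) by ring]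
      rw [← Real.rpow_add (by norm_num), ← Real.rpow_add hlog2]
      norm_num
    calc (2:ℝ) ^ (2 - a) * |Real.exp δ - 1| * Real.log 2 ^ (1 - a) *
        (Real.log (Real.exp (-δ) + 1) + Real.log (Real.exp δ + 1)) ^ (a - 1) /
        (Real.exp δ + 1)
        ≤ (2:ℝ) ^ (2 - a) * (Real.exp δ + 1) * Real.log 2 ^ (1 - a) *
          (2 * Real.log 2) ^ (a - 1) / (Real.exp δ + 1) := by
          gcongr
      _ = (2:ℝ) ^ (2 - a) * Real.log 2 ^ (1 - a) * (2 * Real.log 2) ^ (a - 1) := by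
          field_simp
      _ = 2 := key
      _ ≤ 3 := by norm_num
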